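/- Let N >= 2, let M be a matching of K_N, let e = uv be an edge of K_N with M' = M ∪ {e} also a matching, let G = K_N△M and G' = K_N△M' with new vertex w. Let d be a D(G')-draconian sequence. If the entry d_w equals 1, then deleting the coordinate w from d yields a D(G)-draconian sequence. -/
import Mathlib


/-- `c : V → ℕ` is a `D(H)`-draconian sequence for the simple graph `H` on `V`:
the entries sum to `|V| - 1` and, for every nonempty `S ⊆ V`, the partial sum over `S`
is strictly less than the size of `⋃_{i ∈ S} N_{D(H)}(i)`, where
`N_{D(H)}(i) = {ī} ∪ {j̄ : ij ∈ E(H)}`. -/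
def DraconianD {V : Type*} [Fintype V] (H : SimpleGraph V) (c : V → ℕ) : Prop :=
  (∑ v, c v) = Fintype.card V - 1 ∧
    ∀ S : Finset V, S.Nonempty →
      (∑ i ∈ S, c i) < ((S : Set V) ∪ ⋃ i ∈ S, H.neighborSet i).ncard

/-- `G △ e` for `e = uv`: add a new vertex (`none`) adjacent to exactly `u` and `v`. -/
def triExt {V : Type*} (G : SimpleGraph V) (u v : V) : SimpleGraph (Option V) :=
  SimpleGraph.fromRel fun a b =>
    (∃ x y, a = some x ∧ b = some y ∧ G.Adj x y) ∨ (a = none ∧ (b = some u ∨ b = some v))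

/-- `K_N △ 𝓜` for a matching `𝓜` with `M` edges `{f i, g i}`: the complete graph on
`Fin N` (the `inl` vertices) together with, for each `i : Fin M`, a new vertex `inr i`
adjacent to exactly `f i` and `g i`. -/
def MatchTri (N M : ℕ) (f g : Fin M → Fin N) : SimpleGraph (Fin N ⊕ Fin M) :=
  SimpleGraph.fromRel fun a b =>
    (∃ x y : Fin N, a = Sum.inl x ∧ b = Sum.inl y ∧ x ≠ y) ∨
    (∃ i : Fin M, a = Sum.inr i ∧ (b = Sum.inl (f i) ∨ b = Sum.inl (g i)))

/-- With `G = K_N △ 𝓜`, `e = uv` disjoint from the matching, and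
`G' = K_N △ (𝓜 ∪ {e})` (new vertex `w = none`): if `d` is a `D(G')`-draconian sequence
with `d w = 1`, then deleting the coordinate `w` yields a `D(G)`-draconian sequence. -/
lemma triExt_adj_some_some {V : Type*} (G : SimpleGraph V) (u v a b : V) :
    (triExt G u v).Adj (some a) (some b) ↔ G.Adj a b := by
  simp only [triExt, SimpleGraph.fromRel_adj, ne_eq, Option.some.injEq]
  constructor
  · rintro ⟨hne, h | h⟩ <;> rcases h with ⟨x, y, hx, hy, hadj⟩ | ⟨h, -⟩ <;>
      first
      | (cases hx; cases hy; first | exact hadj | exact hadj.symm)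
      | exact absurd h (by simp)
  · intro h
    exact ⟨fun he => G.irrefl (he ▸ h), Or.inl (Or.inl ⟨a, b, rfl, rfl, h⟩)⟩

lemma triExt_adj_none {V : Type*} (G : SimpleGraph V) (u v : V) (x : Option V) :
    (triExt G u v).Adj none x ↔ x = some u ∨ x = some v := by
  simp only [triExt, SimpleGraph.fromRel_adj, ne_eq]
  constructor
  · rintro ⟨hne, h | h⟩ <;> rcases h with ⟨a, b, ha, hb, -⟩ | ⟨h1, h2⟩
    · exact absurd ha (by simp)
    · exact h2
    · exact absurd hb (by simp)
    · exact absurd h1 (Ne.symm hne)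
  · rintro (rfl | rfl)
    · exact ⟨by simp, Or.inl (Or.inr ⟨trivial, Or.inl rfl⟩)⟩
    · exact ⟨by simp, Or.inl (Or.inr ⟨trivial, Or.inr rfl⟩)⟩

theorem stmt7 (N M : ℕ) (hN : 2 ≤ N) (f g : Fin M → Fin N)
    (hmatch : Function.Injective (Sum.elim f g : Fin M ⊕ Fin M → Fin N))
    (u v : Fin N) (huv : u ≠ v)
    (hdisj : ∀ i : Fin M, u ≠ f i ∧ u ≠ g i ∧ v ≠ f i ∧ v ≠ g i)
    (d : Option (Fin N ⊕ Fin M) → ℕ)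
    (hd : DraconianD (triExt (MatchTri N M f g) (Sum.inl u) (Sum.inl v)) d)
    (h1 : d none = 1) :
    DraconianD (MatchTri N M f g) (fun x => d (some x)) := by
  classical
  obtain ⟨hsum, hdrac⟩ := hd
  set G := MatchTri N M f g with hG
  set G' := triExt G (Sum.inl u) (Sum.inl v) with hG'
  rw [Fintype.sum_option] at hsum
  simp only [Fintype.card_option, Fintype.card_sum, Fintype.card_fin] at hsum
  constructor
  · simp only [Fintype.card_sum, Fintype.card_fin]
    omega
  intro S hS
  have hbeta : ∑ i ∈ S, (fun x => d (some x)) i = ∑ i ∈ S, d (some i) := rfl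
  rw [hbeta]
  set A : Set (Fin N ⊕ Fin M) := ↑S ∪ ⋃ i ∈ S, G.neighborSet i with hA
  have hSsubA : ∀ a ∈ S, a ∈ A := fun a ha => Or.inl ha
  have hNsubA : ∀ a ∈ S, ∀ b, G.Adj a b → b ∈ A := fun a ha b hab =>
    Or.inr (Set.mem_biUnion ha hab)
  have hsumS : ∑ i ∈ S.image some, d i = ∑ i ∈ S, d (some i) :=
    Finset.sum_image (by simp)
  have hAncard : (some '' A).ncard = A.ncard :=
    Set.ncard_image_of_injective _ (Option.some_injective _)
  by_cases hc : Sum.inl u ∈ S ∨ Sum.inl v ∈ S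
  · -- u or v in S : use S ∪ {w}
    have hnone : (none : Option (Fin N ⊕ Fin M)) ∉ S.image some := by simp
    have huvA : Sum.inl u ∈ A ∧ Sum.inl v ∈ A := by
      have hadj : G.Adj (Sum.inl u) (Sum.inl v) := by
        rw [hG, MatchTri, SimpleGraph.fromRel_adj]
        exact ⟨by simpa using huv, Or.inl (Or.inl ⟨u, v, rfl, rfl, huv⟩)⟩
      rcases hc with h | h
      · exact ⟨hSsubA _ h, hNsubA _ h _ hadj⟩
      · exact ⟨hNsubA _ h _ hadj.symm, hSsubA _ h⟩
    have hD := hdrac (insert none (S.image some)) ⟨none, Finset.mem_insert_self _ _⟩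
    rw [Finset.sum_insert hnone, hsumS, h1] at hD
    have hincl : ((↑(insert none (S.image some)) : Set (Option (Fin N ⊕ Fin M))) ∪
        ⋃ i ∈ insert none (S.image some), G'.neighborSet i)
        ⊆ insert none (some '' A) := by
      rintro x (hx | hx)
      · simp only [Finset.coe_insert, Set.mem_insert_iff, Finset.coe_image,
          Set.mem_image, Finset.mem_coe] at hx
        rcases hx with rfl | ⟨a, ha, rfl⟩
        · exact Set.mem_insert _ _
        · exact Set.mem_insert_of_mem _ ⟨a, hSsubA a ha, rfl⟩
      · simp only [Finset.mem_insert, Set.mem_iUnion, exists_prop] at hx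
        obtain ⟨i, hi | hi, hx⟩ := hx
        · subst hi
          rw [SimpleGraph.mem_neighborSet, hG', triExt_adj_none] at hx
          rcases hx with rfl | rfl
          · exact Set.mem_insert_of_mem _ ⟨_, huvA.1, rfl⟩
          · exact Set.mem_insert_of_mem _ ⟨_, huvA.2, rfl⟩
        · obtain ⟨a, ha, rfl⟩ := Finset.mem_image.mp hi
          rw [SimpleGraph.mem_neighborSet] at hx
          match x with
          | none => exact Set.mem_insert _ _
          | some b =>
            rw [hG', triExt_adj_some_some] at hx
            exact Set.mem_insert_of_mem _ ⟨b, hNsubA a ha b hx, rfl⟩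
    have hle := Set.ncard_le_ncard hincl (Set.toFinite _)
    have h2 : (insert (none : Option (Fin N ⊕ Fin M)) (some '' A)).ncard ≤ A.ncard + 1 := by
      calc (insert (none : Option (Fin N ⊕ Fin M)) (some '' A)).ncard
          ≤ (some '' A).ncard + 1 := Set.ncard_insert_le _ _
        _ = A.ncard + 1 := by rw [hAncard]
    omega
  · -- neither u nor v in S
    push_neg at hc
    have hD := hdrac (S.image some) (hS.image _)
    rw [hsumS] at hD
    have hincl : ((↑(S.image some) : Set (Option (Fin N ⊕ Fin M))) ∪
        ⋃ i ∈ S.image some, G'.neighborSet i) ⊆ some '' A := by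
      rintro x (hx | hx)
      · simp only [Finset.coe_image, Set.mem_image, Finset.mem_coe] at hx
        obtain ⟨a, ha, rfl⟩ := hx
        exact ⟨a, hSsubA a ha, rfl⟩
      · simp only [Set.mem_iUnion, exists_prop] at hx
        obtain ⟨i, hi, hx⟩ := hx
        obtain ⟨a, ha, rfl⟩ := Finset.mem_image.mp hi
        rw [SimpleGraph.mem_neighborSet] at hx
        match x with
        | none =>
          rw [hG'] at hx
          rw [show ((triExt G (Sum.inl u) (Sum.inl v)).Adj (some a) none) =
            ((triExt G (Sum.inl u) (Sum.inl v)).Adj none (some a)) from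
            propext ⟨SimpleGraph.Adj.symm, SimpleGraph.Adj.symm⟩, triExt_adj_none] at hx
          rcases hx with hx | hx <;> rcases Option.some_injective _ hx with rfl
          · exact absurd ha hc.1
          · exact absurd ha hc.2
        | some b =>
          rw [hG', triExt_adj_some_some] at hx
          exact ⟨b, hNsubA a ha b hx, rfl⟩
    have hle := Set.ncard_le_ncard hincl (Set.toFinite _)
    omega
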